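/- Let W be a 6-dimensional complex vector space and U ⊂ W a 3-dimensional subspace. Then the subspace T_U = ∧²U ∧ W ⊂ ∧³W is 10-dimensional and is Lagrangian with respect to the symplectic form ω(α,β) = vol(α ∧ β). -/

import Mathlib

open ExteriorAlgebra Module

abbrev ι6 := (Fin 3 ⊕ Fin 3)

def idxT : Fin 10 → Fin 3 → ι6 :=
  ![![.inl 0, .inl 1, .inl 2],
    ![.inl 0, .inl 1, .inr 0], ![.inl 0, .inl 1, .inr 1], ![.inl 0, .inl 1, .inr 2],
    ![.inl 0, .inl 2, .inr 0], ![.inl 0, .inl 2, .inr 1], ![.inl 0, .inl 2, .inr 2],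
    ![.inl 1, .inl 2, .inr 0], ![.inl 1, .inl 2, .inr 1], ![.inl 1, .inl 2, .inr 2]]

def catT (t t' : Fin 10) : Fin 6 → ι6 :=
  ![idxT t 0, idxT t 1, idxT t 2, idxT t' 0, idxT t' 1, idxT t' 2]

lemma idx_left : ∀ t : Fin 10, (∃ a, idxT t 0 = .inl a) ∧ (∃ a, idxT t 1 = .inl a) := by decide
lemma idx_inj : ∀ t : Fin 10, Function.Injective (idxT t) := by decide
lemma idx_distinct : ∀ t t' : Fin 10, t ≠ t' → ∃ s : Fin 3, ∀ s', idxT t' s ≠ idxT t s' := by decide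
lemma pair_repeat : ∀ t t' : Fin 10, ∃ p q : Fin 6, p ≠ q ∧ catT t t' p = catT t t' q := by decide
lemma sort_triple : ∀ f : Fin 3 → ι6, (f 0).isLeft → (f 1).isLeft →
    (¬ Function.Injective f) ∨ ∃ t : Fin 10, ∃ g : Fin 3 → Fin 3,
      Function.Bijective g ∧ ∀ s, f (g s) = idxT t s := by
  set_option maxRecDepth 10000 in decide

private lemma triple_eq {R M : Type*} [CommRing R] [AddCommGroup M] [Module R M] (f : Fin 3 → M) :
    ExteriorAlgebra.ιMulti R 3 f =
      ExteriorAlgebra.ι R (f 0) * ExteriorAlgebra.ι R (f 1) * ExteriorAlgebra.ι R (f 2) := by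
  simp [ExteriorAlgebra.ιMulti_apply, List.ofFn_succ, mul_assoc, Matrix.vecTail, Function.comp]
  

private lemma six_eq {R M : Type*} [CommRing R] [AddCommGroup M] [Module R M] (f : Fin 6 → M) :
    ExteriorAlgebra.ιMulti R 6 f =
      ExteriorAlgebra.ι R (f 0) * ExteriorAlgebra.ι R (f 1) * ExteriorAlgebra.ι R (f 2) *
      ExteriorAlgebra.ι R (f 3) * ExteriorAlgebra.ι R (f 4) * ExteriorAlgebra.ι R (f 5) := by
  simp [ExteriorAlgebra.ιMulti_apply, List.ofFn_succ, mul_assoc, Matrix.vecTail, Function.comp]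
theorem T_U_lagrangian
    (W : Type) [AddCommGroup W] [Module ℂ W] [FiniteDimensional ℂ W]
    (hdim : finrank ℂ W = 6)
    (vol : (⋀[ℂ]^6 W) ≃ₗ[ℂ] ℂ)
    (U : Submodule ℂ W) (hU : finrank ℂ U = 3)
    (T_U : Submodule ℂ (ExteriorAlgebra ℂ W))
    (hT : T_U = Submodule.span ℂ
      {x | ∃ u₁ ∈ U, ∃ u₂ ∈ U, ∃ w : W,
        x = ExteriorAlgebra.ι ℂ u₁ * ExteriorAlgebra.ι ℂ u₂ * ExteriorAlgebra.ι ℂ w}) :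
    finrank ℂ T_U = 10 ∧
    ∃ h3 : T_U ≤ ⋀[ℂ]^3 W,
      ∀ α β : ExteriorAlgebra ℂ W, ∀ hα : α ∈ T_U, ∀ hβ : β ∈ T_U,
        vol ⟨α * β, SetLike.mul_mem_graded (h3 hα) (h3 hβ)⟩ = 0 := by
  classical
  obtain ⟨C, hC⟩ := Submodule.exists_isCompl U
  have hCfin : finrank ℂ C = 3 := by
    have := Submodule.finrank_add_eq_of_isCompl hC
    omega
  let bU : Basis (Fin 3) ℂ U := finBasisOfFinrankEq ℂ U hU
  let bC : Basis (Fin 3) ℂ C := finBasisOfFinrankEq ℂ C hCfin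
  let E : Basis ι6 ℂ W := (bU.prod bC).map (Submodule.prodEquivOfIsCompl U C hC)
  have hEinl : ∀ a : Fin 3, E (.inl a) = (bU a : W) := by
    intro a
    simp [E, Basis.map_apply, Submodule.coe_prodEquivOfIsCompl]
  have hEU : ∀ a : Fin 3, E (.inl a) ∈ U := fun a => (hEinl a) ▸ (bU a).2
  set v : Fin 10 → ExteriorAlgebra ℂ W :=
    fun t => ExteriorAlgebra.ιMulti ℂ 3 (fun s => E (idxT t s)) with hv
  -- each v t is a generator
  have hvT : ∀ t, v t ∈ T_U := by
    intro t
    obtain ⟨⟨a, ha⟩, ⟨b, hb⟩⟩ := idx_left t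
    rw [hT]
    apply Submodule.subset_span
    refine ⟨E (idxT t 0), ?_, E (idxT t 1), ?_, E (idxT t 2), ?_⟩
    · rw [ha]; exact hEU a
    · rw [hb]; exact hEU b
    · rw [hv]; exact triple_eq _
  -- expansion: generators lie in span of v
  have hgen : ∀ x ∈ {x | ∃ u₁ ∈ U, ∃ u₂ ∈ U, ∃ w : W,
      x = ExteriorAlgebra.ι ℂ u₁ * ExteriorAlgebra.ι ℂ u₂ * ExteriorAlgebra.ι ℂ w},
      x ∈ Submodule.span ℂ (Set.range v) := by
    rintro x ⟨u₁, hu₁, u₂, hu₂, w, rfl⟩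
    set a : ι6 → ℂ := Sum.elim (fun i => bU.repr ⟨u₁, hu₁⟩ i) (fun _ => 0) with ha'
    set b : ι6 → ℂ := Sum.elim (fun i => bU.repr ⟨u₂, hu₂⟩ i) (fun _ => 0) with hb'
    set c : ι6 → ℂ := fun j => E.repr w j with hc'
    have hexp : ∀ (u : W) (hu : u ∈ U),
        u = ∑ j : ι6, (Sum.elim (fun i => bU.repr ⟨u, hu⟩ i) (fun _ => (0:ℂ))) j • E j := by
      intro u hu
      rw [Fintype.sum_sum_type]
      simp only [Sum.elim_inl, Sum.elim_inr, zero_smul, Finset.sum_const_zero, add_zero, hEinl]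
      calc u = ((∑ i, bU.repr ⟨u, hu⟩ i • bU i : U) : W) := by rw [bU.sum_repr ⟨u, hu⟩]
        _ = _ := by push_cast; rfl
    have hw : w = ∑ j : ι6, c j • E j := (E.sum_repr w).symm
    set coef : Fin 3 → ι6 → ℂ := ![a, b, c] with hcoef
    have hvec : (fun s : Fin 3 => (![u₁, u₂, w] : Fin 3 → W) s)
        = fun s => ∑ j : ι6, coef s j • E j := by
      funext s
      fin_cases s
      · exact hexp u₁ hu₁
      · exact hexp u₂ hu₂
      · exact hw
    have key : ExteriorAlgebra.ι ℂ u₁ * ExteriorAlgebra.ι ℂ u₂ * ExteriorAlgebra.ι ℂ w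
        = ExteriorAlgebra.ιMulti ℂ 3 ![u₁, u₂, w] := by
      rw [triple_eq]; rfl
    rw [key]
    have expand : ExteriorAlgebra.ιMulti ℂ 3 ![u₁, u₂, w]
        = ∑ r : Fin 3 → ι6, (∏ s, coef s (r s)) •
            ExteriorAlgebra.ιMulti ℂ 3 (fun s => E (r s)) := by
      calc ExteriorAlgebra.ιMulti ℂ 3 ![u₁, u₂, w]
          = (ExteriorAlgebra.ιMulti ℂ 3).toMultilinearMap
              (fun s => ∑ j : ι6, coef s j • E j) := by rw [← hvec]; rfl
        _ = ∑ r : Fin 3 → ι6, (ExteriorAlgebra.ιMulti ℂ 3).toMultilinearMap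
              (fun s => coef s (r s) • E (r s)) := by
            rw [MultilinearMap.map_sum]
        _ = _ := by
            refine Finset.sum_congr rfl fun r _ => ?_
            rw [MultilinearMap.map_smul_univ]
            rfl
    rw [expand]
    refine Submodule.sum_mem _ fun r _ => ?_
    by_cases h0 : (r 0).isLeft
    · by_cases h1 : (r 1).isLeft
      · rcases sort_triple r h0 h1 with hni | ⟨t, g, hg, hfg⟩
        · have : ¬ Function.Injective (fun s => E (r s)) := by
            intro hinj
            exact hni fun s s' hss' => hinj (by simp [hss'])
          rw [(ExteriorAlgebra.ιMulti ℂ 3).map_eq_zero_of_not_injective _ this, smul_zero]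
          exact Submodule.zero_mem _
        · set σ : Equiv.Perm (Fin 3) := Equiv.ofBijective g hg with hσ
          have hperm := (ExteriorAlgebra.ιMulti ℂ 3).map_perm (fun s => E (r s)) σ
          have hcomp : ((fun s => E (r s)) ∘ σ) = fun s => E (idxT t s) := by
            funext s
            simp [hσ, Equiv.ofBijective, hfg s]
          rw [hcomp] at hperm
          have hmem : ExteriorAlgebra.ιMulti ℂ 3 (fun s => E (r s))
              ∈ Submodule.span ℂ (Set.range v) := by
            have hvt : v t ∈ Submodule.span ℂ (Set.range v) :=
              Submodule.subset_span ⟨t, rfl⟩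
            rw [hv] at hvt
            rcases Int.units_eq_one_or (Equiv.Perm.sign σ) with hs | hs
            · rw [hs, one_smul] at hperm
              rw [← hperm]; exact hvt
            · rw [hs, Units.smul_def] at hperm
              have : ExteriorAlgebra.ιMulti ℂ 3 (fun s => E (r s))
                  = - ExteriorAlgebra.ιMulti ℂ 3 (fun s => E (idxT t s)) := by
                rw [hperm]; simp
              rw [this]
              exact Submodule.neg_mem _ hvt
          exact Submodule.smul_mem _ _ hmem
      · have : coef 1 (r 1) = 0 := by
          rcases Sum.not_isLeft.mp h1 with h
          obtain ⟨y, hy⟩ := Sum.isRight_iff.mp h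
          rw [hcoef, hy]
          simp [hb']
        have : (∏ s, coef s (r s)) = 0 :=
          Finset.prod_eq_zero (Finset.mem_univ 1) this
        rw [this, zero_smul]
        exact Submodule.zero_mem _
    · have : coef 0 (r 0) = 0 := by
        rcases Sum.not_isLeft.mp h0 with h
        obtain ⟨y, hy⟩ := Sum.isRight_iff.mp h
        rw [hcoef, hy]
        simp [ha']
      have : (∏ s, coef s (r s)) = 0 :=
        Finset.prod_eq_zero (Finset.mem_univ 0) this
      rw [this, zero_smul]
      exact Submodule.zero_mem _
  have hspan : T_U = Submodule.span ℂ (Set.range v) := by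
    refine le_antisymm ?_ ?_
    · rw [hT]
      exact Submodule.span_le.mpr hgen
    · exact Submodule.span_le.mpr (by rintro x ⟨t, rfl⟩; exact hvT t)
  -- functionals
  have hφ : ∀ t' : Fin 10, ∃ φ : ExteriorAlgebra ℂ W →ₗ[ℂ] ℂ,
      ∀ t, φ (v t) = if t = t' then 1 else 0 := by
    intro t'
    set L : W →ₗ[ℂ] (Fin 3 → ℂ) := LinearMap.pi (fun s => E.coord (idxT t' s)) with hL
    set f3 : W [⋀^Fin 3]→ₗ[ℂ] ℂ := Matrix.detRowAlternating.compLinearMap L with hf3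
    refine ⟨ExteriorAlgebra.liftAlternating
      (Function.update (fun i => (0 : W [⋀^Fin i]→ₗ[ℂ] ℂ)) 3 f3), fun t => ?_⟩
    rw [hv]
    rw [ExteriorAlgebra.liftAlternating_apply_ιMulti, Function.update_self]
    have : f3 (fun s => E (idxT t s))
        = Matrix.det (Matrix.of fun s s' : Fin 3 =>
            if idxT t s = idxT t' s' then (1:ℂ) else 0) := by
      rw [hf3, AlternatingMap.compLinearMap_apply]
      congr 1
      funext s s'
      simp [hL, Matrix.of_apply, Basis.coord_apply, Basis.repr_self, Finsupp.single_apply,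
        LinearMap.pi_apply]
    rw [this]
    by_cases htt : t = t'
    · subst htt
      have : (Matrix.of fun s s' : Fin 3 =>
          if idxT t s = idxT t s' then (1:ℂ) else 0) = 1 := by
        ext s s'
        by_cases hss : s = s'
        · subst hss; simp
        · rw [Matrix.one_apply_ne hss]
          simp only [Matrix.of_apply, ite_eq_right_iff]
          intro h
          exact absurd (idx_inj t h) hss
      rw [this, Matrix.det_one, if_pos rfl]
    · rw [if_neg htt]
      obtain ⟨s, hs⟩ := idx_distinct t' t (Ne.symm htt)
      refine Matrix.det_eq_zero_of_row_eq_zero s fun s' => ?_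
      simp only [Matrix.of_apply, ite_eq_right_iff]
      intro h
      exact absurd h (hs s')
  have hli : LinearIndependent ℂ v := by
    rw [Fintype.linearIndependent_iff]
    intro cc hcc t'
    obtain ⟨φ, hφ'⟩ := hφ t'
    have := congrArg φ hcc
    rw [map_sum, map_zero] at this
    simp only [map_smul, hφ', smul_eq_mul, mul_ite, mul_one, mul_zero,
      Finset.sum_ite_eq', Finset.mem_univ, if_pos] at this
    exact this
  constructor
  · rw [hspan, finrank_span_eq_card hli, Fintype.card_fin]
  · have h3 : T_U ≤ ⋀[ℂ]^3 W := by
      rw [hT]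
      refine Submodule.span_le.mpr ?_
      rintro x ⟨u₁, hu₁, u₂, hu₂, w, rfl⟩
      have key : ExteriorAlgebra.ι ℂ u₁ * ExteriorAlgebra.ι ℂ u₂ * ExteriorAlgebra.ι ℂ w
          = ExteriorAlgebra.ιMulti ℂ 3 ![u₁, u₂, w] := by rw [triple_eq]; rfl
      rw [key]
      exact ExteriorAlgebra.ιMulti_range ℂ 3 ⟨![u₁,u₂,w], rfl⟩
    refine ⟨h3, fun α β hα hβ => ?_⟩
    have hvv : ∀ t t', v t * v t' = 0 := by
      intro t t'
      have h6 : v t * v t' = ExteriorAlgebra.ιMulti ℂ 6 (fun p => E (catT t t' p)) := by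
        rw [hv]
        beta_reduce
        rw [six_eq, triple_eq, triple_eq]
        simp only [catT]
        simp [mul_assoc]
      rw [h6]
      refine (ExteriorAlgebra.ιMulti ℂ 6).map_eq_zero_of_not_injective _ ?_
      obtain ⟨p, q, hpq, heq⟩ := pair_repeat t t'
      intro hinj
      exact hpq (hinj (congrArg E heq))
    have hmulz : α * β = 0 := by
      rw [hspan] at hα hβ
      induction hα using Submodule.span_induction with
      | mem x hx =>
        obtain ⟨t, rfl⟩ := hx
        induction hβ using Submodule.span_induction with
        | mem y hy => obtain ⟨t', rfl⟩ := hy; exact hvv t t'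
        | zero => rw [mul_zero]
        | add y z _ _ hy hz => rw [mul_add, hy, hz, add_zero]
        | smul r y _ hy => rw [mul_smul_comm, hy, smul_zero]
      | zero => rw [zero_mul]
      | add x y _ _ hx hy => rw [add_mul, hx, hy, add_zero]
      | smul r x _ hx => rw [smul_mul_assoc, hx, smul_zero]
    have hz : (⟨α * β, SetLike.mul_mem_graded (h3 hα) (h3 hβ)⟩ : (⋀[ℂ]^6 W)) = 0 :=
      Subtype.ext hmulz
    rw [hz]
    exact LinearEquiv.map_zero vol
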